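/- Assume det Γ_∞ > 0 where (1/n)Γ_{;n} → Γ_∞. Let a = p Γ^{-1} and, for each i, let a_{i-} = p_{i-} Γ_{i-}^{-1} be the weights computed after zeroing out the i-th row of p. Then sup over i ≠ j and m of |a_{j;n}^{(m)} − a_{j i-;n}^{(m)}| = O(n^{-2}) as n → ∞. In particular, the difference of weights equals (1/(1−h_i)) Γ^{-1} p_i p_i^T Γ^{-1} p_j componentwise, where h_i = p_i^T Γ^{-1} p_i. -/

import Mathlib

open Matrix Filter
open scoped BigOperators Topology

variable {M : ℕ}

lemma vmv_mul_vmv (u v w z : Fin M → ℝ) :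
    vecMulVec u v * vecMulVec w z = (v ⬝ᵥ w) • vecMulVec u z := by
  ext a b
  simp only [mul_apply, vecMulVec_apply, dotProduct, Matrix.smul_apply, smul_eq_mul,
    Finset.sum_mul, Finset.mul_sum]
  exact Finset.sum_congr rfl fun k _ => by ring

lemma mul_vmv (A : Matrix (Fin M) (Fin M) ℝ) (u v : Fin M → ℝ) :
    A * vecMulVec u v = vecMulVec (A *ᵥ u) v := by
  ext a b
  simp only [mul_apply, vecMulVec_apply, mulVec, dotProduct, Finset.sum_mul]
  exact Finset.sum_congr rfl fun k _ => by ring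

lemma vmv_mul (u v : Fin M → ℝ) (A : Matrix (Fin M) (Fin M) ℝ) :
    vecMulVec u v * A = vecMulVec u (v ᵥ* A) := by
  ext a b
  simp only [mul_apply, vecMulVec_apply, vecMul, dotProduct, Finset.mul_sum]
  exact Finset.sum_congr rfl fun k _ => by ring

lemma vmv_mulVec (u v w : Fin M → ℝ) :
    vecMulVec u v *ᵥ w = (v ⬝ᵥ w) • u := by
  ext a
  simp only [mulVec, vecMulVec_apply, dotProduct, Pi.smul_apply, smul_eq_mul, Finset.sum_mul]
  exact Finset.sum_congr rfl fun k _ => by ring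

lemma sm_key (G : Matrix (Fin M) (Fin M) ℝ) (u : Fin M → ℝ)
    (hU : IsUnit G.det) (hh : u ⬝ᵥ G⁻¹ *ᵥ u ≠ 1) :
    (G - vecMulVec u u) *
      (G⁻¹ + (1 / (1 - u ⬝ᵥ G⁻¹ *ᵥ u)) • (G⁻¹ * vecMulVec u u * G⁻¹)) = 1 := by
  set h := u ⬝ᵥ G⁻¹ *ᵥ u with hhdef
  set c := 1 / (1 - h) with hc
  set V := vecMulVec u u with hV
  have hGV : G * (G⁻¹ * V * G⁻¹) = V * G⁻¹ := by
    rw [← Matrix.mul_assoc, ← Matrix.mul_assoc, Matrix.mul_nonsing_inv _ hU, Matrix.one_mul]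
  have hVV : V * (G⁻¹ * V * G⁻¹) = h • (V * G⁻¹) := by
    have h1 : V * G⁻¹ = vecMulVec u (u ᵥ* G⁻¹) := vmv_mul u u G⁻¹
    have h2 : V * G⁻¹ * V = h • V := by
      rw [h1, hV, vmv_mul_vmv]
      congr 1
      rw [hhdef, dotProduct_mulVec]
    calc V * (G⁻¹ * V * G⁻¹) = (V * G⁻¹ * V) * G⁻¹ := by
          simp only [Matrix.mul_assoc]
      _ = h • (V * G⁻¹) := by rw [h2, Matrix.smul_mul]
  have h1 : (1 : ℝ) - h ≠ 0 := sub_ne_zero.mpr (fun e => hh e.symm)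
  have hcc : c - 1 - c * h = 0 := by
    rw [hc]; linear_combination one_div_mul_cancel h1
  rw [Matrix.sub_mul, Matrix.mul_add, Matrix.mul_add, Matrix.mul_smul, Matrix.mul_smul,
    Matrix.mul_nonsing_inv _ hU, hGV, hVV, smul_smul]
  have : (1 : Matrix (Fin M) (Fin M) ℝ) + c • (V * G⁻¹) - (V * G⁻¹ + (c * h) • (V * G⁻¹))
      = 1 + (c - 1 - c * h) • (V * G⁻¹) := by
    rw [sub_smul, sub_smul, one_smul]
    abel
  rw [this, hcc, zero_smul, add_zero]

lemma sm_inv (G : Matrix (Fin M) (Fin M) ℝ) (u : Fin M → ℝ)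
    (hU : IsUnit G.det) (hh : u ⬝ᵥ G⁻¹ *ᵥ u ≠ 1) :
    (G - vecMulVec u u)⁻¹ =
      G⁻¹ + (1 / (1 - u ⬝ᵥ G⁻¹ *ᵥ u)) • (G⁻¹ * vecMulVec u u * G⁻¹) :=
  Matrix.inv_eq_right_inv (sm_key G u hU hh)

lemma sm_isUnit (G : Matrix (Fin M) (Fin M) ℝ) (u : Fin M → ℝ)
    (hU : IsUnit G.det) (hh : u ⬝ᵥ G⁻¹ *ᵥ u ≠ 1) :
    IsUnit (G - vecMulVec u u).det :=
  Matrix.isUnit_det_of_right_inverse (sm_key G u hU hh)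

lemma mulVec_entry_bound (B : Matrix (Fin M) (Fin M) ℝ) (w : Fin M → ℝ) (ε : ℝ)
    (hε : 0 ≤ ε) (hB : ∀ k l, |B k l| ≤ ε) (hw : ∀ k, |w k| ≤ 1) (m : Fin M) :
    |(B *ᵥ w) m| ≤ M * ε := by
  calc |(B *ᵥ w) m| ≤ ∑ k, |B m k * w k| := by
        simpa [mulVec, dotProduct] using Finset.abs_sum_le_sum_abs (fun k => B m k * w k) Finset.univ
    _ ≤ ∑ _k : Fin M, ε := by
        refine Finset.sum_le_sum fun k _ => ?_
        rw [abs_mul]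
        calc |B m k| * |w k| ≤ ε * 1 :=
              mul_le_mul (hB m k) (hw k) (abs_nonneg _) hε
          _ = ε := mul_one ε
    _ = M * ε := by simp [mul_comm]

lemma dot_mulVec_bound (v : Fin M → ℝ) (B : Matrix (Fin M) (Fin M) ℝ) (w : Fin M → ℝ) (ε : ℝ)
    (hε : 0 ≤ ε) (hv : ∀ k, |v k| ≤ 1) (hB : ∀ k l, |B k l| ≤ ε) (hw : ∀ k, |w k| ≤ 1) :
    |v ⬝ᵥ B *ᵥ w| ≤ M ^ 2 * ε := by
  calc |v ⬝ᵥ B *ᵥ w| ≤ ∑ k, |v k * (B *ᵥ w) k| :=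
        Finset.abs_sum_le_sum_abs _ _
    _ ≤ ∑ _k : Fin M, M * ε := by
        refine Finset.sum_le_sum fun k _ => ?_
        rw [abs_mul]
        calc |v k| * |(B *ᵥ w) k| ≤ 1 * (M * ε) :=
              mul_le_mul (hv k) (mulVec_entry_bound B w ε hε hB hw k) (abs_nonneg _) one_pos.le
          _ = M * ε := one_mul _
    _ = M ^ 2 * ε := by simp [pow_two]; ring

/-- Lemma 1(2): the leave-one-out perturbation of the minimax weights is
uniformly `O(n⁻²)`; moreover the difference of weights is given by the
Sherman–Morrison correction `(1/(1−h_i)) Γ⁻¹ p_i p_iᵀ Γ⁻¹ p_j`. -/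
theorem minimax_weights_leave_one_out_O_inv_n_sq
    {M : ℕ} (p : (n : ℕ) → Matrix (Fin n) (Fin M) ℝ)
    (hp : ∀ n j m, p n j m ∈ Set.Icc (0 : ℝ) 1)
    (Γ : (n : ℕ) → Matrix (Fin M) (Fin M) ℝ) (hΓ : ∀ n, Γ n = (p n)ᵀ * p n)
    (Γim : (n : ℕ) → Fin n → Matrix (Fin M) (Fin M) ℝ)
    (hΓim : ∀ n i, Γim n i = (updateRow (p n) i 0)ᵀ * updateRow (p n) i 0)
    (a : (n : ℕ) → Matrix (Fin n) (Fin M) ℝ) (ha : ∀ n, a n = p n * (Γ n)⁻¹)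
    (aim : (n : ℕ) → Fin n → Matrix (Fin n) (Fin M) ℝ)
    (haim : ∀ n i, aim n i = updateRow (p n) i 0 * (Γim n i)⁻¹)
    (Γinf : Matrix (Fin M) (Fin M) ℝ)
    (hlim : Tendsto (fun n : ℕ => ((n : ℝ)⁻¹) • Γ n) atTop (𝓝 Γinf))
    (hdet : 0 < Γinf.det) :
    (∃ C : ℝ, ∀ᶠ n in atTop, ∀ (i j : Fin n) (m : Fin M), i ≠ j →
        |a n j m - aim n i j m| ≤ C / (n : ℝ) ^ 2) ∧
      ∀ (n : ℕ) (i j : Fin n), i ≠ j → IsUnit (Γ n).det →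
        IsUnit (Γim n i).det →
        (p n i ⬝ᵥ (Γ n)⁻¹.mulVec (p n i)) ≠ 1 →
        (fun m => aim n i j m - a n j m) =
          (1 / (1 - p n i ⬝ᵥ (Γ n)⁻¹.mulVec (p n i))) •
            ((Γ n)⁻¹ * vecMulVec (p n i) (p n i) * (Γ n)⁻¹).mulVec (p n j) := by
  have hpabs : ∀ n (j : Fin n) m, |p n j m| ≤ 1 := fun n j m =>
    abs_le.mpr ⟨by linarith [(hp n j m).1], (hp n j m).2⟩
  -- Γim is a rank-one downdate of Γ
  have hΓsub : ∀ n (i : Fin n), Γim n i = Γ n - vecMulVec (p n i) (p n i) := by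
    intro n i
    rw [hΓim, hΓ]
    ext b d
    simp only [Matrix.sub_apply, mul_apply, transpose_apply, vecMulVec_apply]
    have hfun : ∀ k : Fin n, updateRow (p n) i 0 k b * updateRow (p n) i 0 k d
        = if k = i then 0 else p n k b * p n k d := by
      intro k
      by_cases hk : k = i
      · simp [hk]
      · rw [updateRow_ne hk, if_neg hk]
    rw [Finset.sum_congr rfl fun k _ => hfun k]
    calc ∑ k, (if k = i then 0 else p n k b * p n k d)
        = ∑ k ∈ Finset.univ.erase i, (if k = i then 0 else p n k b * p n k d) :=
          (Finset.sum_erase _ (by simp)).symm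
      _ = ∑ k ∈ Finset.univ.erase i, p n k b * p n k d :=
          Finset.sum_congr rfl fun k hk => if_neg (Finset.ne_of_mem_erase hk)
      _ = (∑ k, p n k b * p n k d) - p n i b * p n i d :=
          Finset.sum_erase_eq_sub (Finset.mem_univ i)
  -- pointwise Sherman–Morrison formula for the weight difference
  have key : ∀ n (i j : Fin n), i ≠ j → IsUnit (Γ n).det →
      (p n i ⬝ᵥ (Γ n)⁻¹.mulVec (p n i)) ≠ 1 →
      (fun m => aim n i j m - a n j m) =
        (1 / (1 - p n i ⬝ᵥ (Γ n)⁻¹.mulVec (p n i))) •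
          ((Γ n)⁻¹ * vecMulVec (p n i) (p n i) * (Γ n)⁻¹).mulVec (p n j) := by
    intro n i j hij hU hh
    set G := Γ n with hG
    set u := p n i with hu
    set c := 1 / (1 - u ⬝ᵥ G⁻¹ *ᵥ u) with hc
    set Z := G⁻¹ * vecMulVec u u * G⁻¹ with hZ
    have hinv : (Γim n i)⁻¹ = G⁻¹ + c • Z := by
      rw [hΓsub n i]; exact sm_inv G u hU hh
    have hGs : Gᵀ = G := by rw [hG, hΓ n, transpose_mul, transpose_transpose]
    have hIs : (G⁻¹)ᵀ = G⁻¹ := by rw [Matrix.transpose_nonsing_inv, hGs]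
    have hVs : (vecMulVec u u)ᵀ = vecMulVec u u := by
      ext x y; simp [vecMulVec_apply, transpose_apply, mul_comm]
    have hZs : Zᵀ = Z := by
      rw [hZ, transpose_mul, transpose_mul, hIs, hVs, Matrix.mul_assoc]
    funext m
    have hmv : (Z *ᵥ p n j) m = ∑ k, p n j k * Z k m := by
      conv_lhs => rw [← hZs, mulVec_transpose]
      simp [vecMul, dotProduct]
    have hrow : ∀ k : Fin M, updateRow (p n) i 0 j k = p n j k := fun k =>
      congrFun (updateRow_ne hij.symm) k
    rw [haim, ha]
    show (updateRow (p n) i 0 * (Γim n i)⁻¹) j m - (p n * G⁻¹) j m = (c • (Z *ᵥ p n j)) m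
    rw [mul_apply, mul_apply, hinv, Pi.smul_apply, smul_eq_mul, hmv]
    simp only [Matrix.add_apply, Matrix.smul_apply, smul_eq_mul, hrow, mul_add,
      Finset.sum_add_distrib, Finset.mul_sum]
    ring_nf
    exact Finset.sum_congr rfl fun k _ => by ring
  refine ⟨?_, fun n i j hij hU _ hh => key n i j hij hU hh⟩
  -- Part 1: the uniform O(n⁻²) bound
  have hdetne : Γinf.det ≠ 0 := ne_of_gt hdet
  have hBtend : Tendsto (fun n : ℕ => (((n : ℝ)⁻¹) • Γ n)⁻¹) atTop (𝓝 Γinf⁻¹) := by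
    have hcont : ContinuousAt Inv.inv Γinf := by
      refine continuousAt_matrix_inv _ ?_
      rw [Ring.inverse_eq_inv']
      exact continuousAt_inv₀ hdetne
    exact hcont.tendsto.comp hlim
  have hUev : ∀ᶠ n : ℕ in atTop, IsUnit (Γ n).det := by
    have hdtend : Tendsto (fun n : ℕ => (((n : ℝ)⁻¹) • Γ n).det) atTop (𝓝 Γinf.det) :=
      ((Continuous.matrix_det continuous_id).continuousAt.tendsto).comp hlim
    filter_upwards [hdtend.eventually (eventually_gt_nhds hdet)] with n hpos
    refine isUnit_iff_ne_zero.mpr fun h0 => ?_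
    rw [Matrix.det_smul, h0, mul_zero] at hpos
    exact lt_irrefl _ hpos
  set C₁ : ℝ := (∑ k : Fin M, ∑ l : Fin M, |Γinf⁻¹ k l|) + 1 with hC₁
  have hC₁1 : 1 ≤ C₁ := by
    have h0 : 0 ≤ ∑ k : Fin M, ∑ l : Fin M, |Γinf⁻¹ k l| :=
      Finset.sum_nonneg fun k _ => Finset.sum_nonneg fun l _ => abs_nonneg _
    rw [hC₁]
    linarith
  have hC₁0 : 0 ≤ C₁ := le_trans zero_le_one hC₁1
  clear_value C₁
  have hentry : ∀ᶠ n : ℕ in atTop, ∀ k l : Fin M, |((((n : ℝ)⁻¹) • Γ n)⁻¹) k l| ≤ C₁ := by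
    rw [eventually_all]
    intro k
    rw [eventually_all]
    intro l
    have htend : Tendsto (fun n : ℕ => ((((n : ℝ)⁻¹) • Γ n)⁻¹) k l) atTop (𝓝 (Γinf⁻¹ k l)) :=
      ((continuous_id.matrix_elem k l).continuousAt.tendsto).comp hBtend
    have hball := htend.eventually (Metric.ball_mem_nhds (Γinf⁻¹ k l) one_pos)
    filter_upwards [hball] with n hn
    simp only [Metric.mem_ball, Real.dist_eq] at hn
    have hL : |Γinf⁻¹ k l| ≤ ∑ k' : Fin M, ∑ l' : Fin M, |Γinf⁻¹ k' l'| := by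
      calc |Γinf⁻¹ k l| ≤ ∑ l' : Fin M, |Γinf⁻¹ k l'| :=
            Finset.single_le_sum (f := fun l' => |Γinf⁻¹ k l'|) (fun l' _ => abs_nonneg _) (Finset.mem_univ l)
        _ ≤ ∑ k' : Fin M, ∑ l' : Fin M, |Γinf⁻¹ k' l'| :=
            Finset.single_le_sum (f := fun k' => ∑ l' : Fin M, |Γinf⁻¹ k' l'|)
              (fun k' _ => Finset.sum_nonneg fun l' _ => abs_nonneg _) (Finset.mem_univ k)
    calc |((((n : ℝ)⁻¹) • Γ n)⁻¹) k l|
        = |((((n : ℝ)⁻¹) • Γ n)⁻¹) k l - Γinf⁻¹ k l + Γinf⁻¹ k l| := by ring_nf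
      _ ≤ |((((n : ℝ)⁻¹) • Γ n)⁻¹) k l - Γinf⁻¹ k l| + |Γinf⁻¹ k l| := abs_add_le _ _
      _ ≤ C₁ := by rw [hC₁]; linarith
  have hsmul : ∀ n : ℕ, 1 ≤ n → IsUnit (Γ n).det →
      (((n : ℝ)⁻¹) • Γ n)⁻¹ = (n : ℝ) • (Γ n)⁻¹ := by
    intro n hn hU
    have hn0 : (n : ℝ) ≠ 0 := Nat.cast_ne_zero.mpr (by omega)
    apply Matrix.inv_eq_right_inv
    rw [Matrix.smul_mul, Matrix.mul_smul, smul_smul, inv_mul_cancel₀ hn0, one_smul,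
      Matrix.mul_nonsing_inv _ hU]
  have hNcast : ∀ᶠ n : ℕ in atTop, 2 * ((M : ℝ) ^ 2 * C₁) ≤ (n : ℝ) :=
    tendsto_natCast_atTop_atTop.eventually_ge_atTop _
  refine ⟨2 * (M : ℝ) ^ 3 * C₁ ^ 2, ?_⟩
  filter_upwards [hUev, hentry, hNcast, eventually_ge_atTop 1] with n hU hent hNc hn1
  intro i j m hij
  have hn0 : (0 : ℝ) < (n : ℝ) := by exact_mod_cast Nat.lt_of_lt_of_le Nat.zero_lt_one hn1
  set ε : ℝ := C₁ / (n : ℝ) with hε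
  have hε0 : 0 ≤ ε := div_nonneg hC₁0 hn0.le
  have hb : ∀ k l : Fin M, |(Γ n)⁻¹ k l| ≤ ε := by
    intro k l
    have := hent k l
    rw [hsmul n hn1 hU] at this
    rw [Matrix.smul_apply, smul_eq_mul, abs_mul, Nat.abs_cast] at this
    rw [hε, le_div_iff₀ hn0]
    linarith [this]
  set u : Fin M → ℝ := p n i with hu
  set h : ℝ := u ⬝ᵥ (Γ n)⁻¹ *ᵥ u with hh
  have hhabs : |h| ≤ (M : ℝ) ^ 2 * ε :=
    dot_mulVec_bound u (Γ n)⁻¹ u ε hε0 (fun k => hpabs n i k) hb (fun k => hpabs n i k)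
  have hsmall : (M : ℝ) ^ 2 * ε ≤ 1 / 2 := by
    rw [hε, ← mul_div_assoc, div_le_iff₀ hn0]
    have h2 : 2 * ((M : ℝ) ^ 2 * C₁) ≤ (n : ℝ) := hNc
    linarith
  have hhalf2 : |h| ≤ 1 / 2 := hhabs.trans hsmall
  have h1h : (1 : ℝ) / 2 ≤ 1 - h := by
    rcases abs_le.mp hhalf2 with ⟨_, h2⟩
    linarith
  have hne1 : h ≠ 1 := by
    intro e
    rw [e] at hhalf2
    norm_num at hhalf2
  have hcabs : |1 / (1 - h)| ≤ 2 := by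
    rw [abs_div, abs_one, abs_of_pos (by linarith : (0:ℝ) < 1 - h), div_le_iff₀ (by linarith)]
    linarith
  have hform := congrFun (key n i j hij hU hne1) m
  have hZv : ((Γ n)⁻¹ * vecMulVec u u * (Γ n)⁻¹) *ᵥ p n j
      = ((u ᵥ* (Γ n)⁻¹) ⬝ᵥ p n j) • ((Γ n)⁻¹ *ᵥ u) := by
    rw [mul_vmv, vmv_mul, vmv_mulVec]
  have hb1 : |(u ᵥ* (Γ n)⁻¹) ⬝ᵥ p n j| ≤ (M : ℝ) ^ 2 * ε := by
    rw [← dotProduct_mulVec]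
    exact dot_mulVec_bound u _ (p n j) ε hε0 (fun k => hpabs n i k) hb (fun k => hpabs n j k)
  have hb2 : |((Γ n)⁻¹ *ᵥ u) m| ≤ (M : ℝ) * ε :=
    mulVec_entry_bound _ u ε hε0 hb (fun k => hpabs n i k) m
  have habs : |a n j m - aim n i j m|
      = |1 / (1 - h)| * (|(u ᵥ* (Γ n)⁻¹) ⬝ᵥ p n j| * |((Γ n)⁻¹ *ᵥ u) m|) := by
    rw [abs_sub_comm, hform, hZv]
    simp only [Pi.smul_apply, smul_eq_mul]
    rw [abs_mul, abs_mul]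
  rw [habs]
  calc |1 / (1 - h)| * (|(u ᵥ* (Γ n)⁻¹) ⬝ᵥ p n j| * |((Γ n)⁻¹ *ᵥ u) m|)
      ≤ 2 * (((M : ℝ) ^ 2 * ε) * ((M : ℝ) * ε)) := by
        have hM2 : (0:ℝ) ≤ (M : ℝ) ^ 2 * ε := by positivity
        have hMε : (0:ℝ) ≤ (M : ℝ) * ε := by positivity
        refine mul_le_mul hcabs ?_ (by positivity) (by norm_num)
        exact mul_le_mul hb1 hb2 (abs_nonneg _) hM2
    _ = 2 * (M : ℝ) ^ 3 * C₁ ^ 2 / (n : ℝ) ^ 2 := by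
        rw [hε]
        field_simp
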